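/- Let $A$ be a commutative ring with $2 \in A^{\times}$ and let $B$ be a commutative $A$-algebra, free of rank 2 as an $A$-module. Then $B$ decomposes as an $A$-module as $B \cong A \oplus M$, where $M = \ker(\frac{1}{2}\mathrm{Tr} : B \to A)$ is a projective $A$-module of rank 1, and for $m, m' \in M$ the product $m m'$ lies in $A \cdot 1 \subset B$. Consequently $B \cong A[z]/(z^2 - s)$ locally, i.e. $B$ is isomorphic as an $A$-algebra to $\mathrm{Sym}^{\bullet}(M)/(m \otimes m' - q(m,m'))$ for the quadratic form $q(m,m') = \frac{1}{2}\mathrm{Tr}(mm')$. -/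

import Mathlib

open Polynomial

lemma my_charpoly_fin_two {R : Type*} [CommRing R] (M : Matrix (Fin 2) (Fin 2) R) :
    M.charpoly = X ^ 2 - C (Matrix.trace M) * X + C M.det := by
  rw [Matrix.charpoly, Matrix.det_fin_two, Matrix.trace_fin_two, Matrix.det_fin_two]
  simp [Matrix.charmatrix_apply, Matrix.one_apply]
  ring

lemma my_sq_eq {A B : Type*} [CommRing A] [CommRing B] [Algebra A B]
    (b : Module.Basis (Fin 2) A B) {x : B} (hx : Algebra.trace A B x = 0) :
    x * x = algebraMap A B (-(Algebra.leftMulMatrix b x).det) := by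
  have htr : Matrix.trace (Algebra.leftMulMatrix b x) = 0 := by
    rw [← Algebra.trace_eq_matrix_trace b x, hx]
  have hCH := Matrix.aeval_self_charpoly (Algebra.leftMulMatrix b x)
  rw [my_charpoly_fin_two, htr] at hCH
  simp only [map_add, map_sub, map_mul, map_pow, aeval_X, aeval_C, map_zero, zero_mul,
    sub_zero, pow_two] at hCH
  apply Algebra.leftMulMatrix_injective b
  rw [map_mul, AlgHom.commutes]
  rw [map_neg]
  exact eq_neg_of_add_eq_zero_left hCH

lemma my_isLocalizedModule_prodMap {R : Type*} [CommRing R] (S : Submonoid R)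
    {M N M' N' : Type*} [AddCommGroup M] [AddCommGroup N] [AddCommGroup M'] [AddCommGroup N']
    [Module R M] [Module R N] [Module R M'] [Module R N']
    (f : M →ₗ[R] M') (g : N →ₗ[R] N') [IsLocalizedModule S f] [IsLocalizedModule S g] :
    IsLocalizedModule S (f.prodMap g) where
  map_units s := by
    have hf := (Module.End.isUnit_iff _).mp (IsLocalizedModule.map_units f s)
    have hg := (Module.End.isUnit_iff _).mp (IsLocalizedModule.map_units g s)
    rw [Module.End.isUnit_iff]
    constructor
    · intro a b hab
      have h1 : (s : R) • a.1 = (s : R) • b.1 := congrArg Prod.fst hab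
      have h2 : (s : R) • a.2 = (s : R) • b.2 := congrArg Prod.snd hab
      exact Prod.ext (hf.1 h1) (hg.1 h2)
    · intro y
      obtain ⟨a, ha⟩ := hf.2 y.1
      obtain ⟨b, hb⟩ := hg.2 y.2
      exact ⟨(a, b), Prod.ext ha hb⟩
  surj y := by
    obtain ⟨⟨x₁, s₁⟩, h₁⟩ := IsLocalizedModule.surj S f y.1
    obtain ⟨⟨x₂, s₂⟩, h₂⟩ := IsLocalizedModule.surj S g y.2
    simp only [Submonoid.smul_def] at h₁ h₂
    refine ⟨⟨(s₂ • x₁, s₁ • x₂), s₁ * s₂⟩, Prod.ext ?_ ?_⟩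
    · show ((s₁ * s₂ : S) : R) • y.1 = f (s₂ • x₁)
      rw [Submonoid.smul_def, f.map_smul, ← h₁, Submonoid.coe_mul, mul_comm, mul_smul]
    · show ((s₁ * s₂ : S) : R) • y.2 = g (s₁ • x₂)
      rw [Submonoid.smul_def, g.map_smul, ← h₂, Submonoid.coe_mul, mul_smul]
  exists_of_eq {x₁ x₂} h := by
    obtain ⟨c₁, hc₁⟩ := IsLocalizedModule.exists_of_eq (S := S) (f := f)
      (congrArg Prod.fst h)
    obtain ⟨c₂, hc₂⟩ := IsLocalizedModule.exists_of_eq (S := S) (f := g)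
      (congrArg Prod.snd h)
    simp only [LinearMap.fst_apply, LinearMap.snd_apply, Submonoid.smul_def] at hc₁ hc₂
    refine ⟨c₁ * c₂, Prod.ext ?_ ?_⟩
    · show ((c₁ * c₂ : S) : R) • x₁.1 = ((c₁ * c₂ : S) : R) • x₂.1
      rw [Submonoid.coe_mul, mul_comm, mul_smul, mul_smul, hc₁]
    · show ((c₁ * c₂ : S) : R) • x₁.2 = ((c₁ * c₂ : S) : R) • x₂.2
      rw [Submonoid.coe_mul, mul_smul, mul_smul, hc₂]

variable (A B : Type*) [CommRing A] [CommRing B] [Algebra A B] [Invertible (2 : A)]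

/-- Half of the trace form `b ↦ (1/2)Tr(b)` as an `A`-linear map. -/
noncomputable def halfTrace : B →ₗ[A] A := ⅟(2 : A) • (Algebra.trace A B)

/-- The trace-zero submodule `M = ker((1/2)Tr : B → A)`. -/
noncomputable def traceZero : Submodule A B := LinearMap.ker (halfTrace A B)

/-- Let `A` be a commutative ring with `2 ∈ Aˣ` and `B` a commutative `A`-algebra, free
of rank 2 as an `A`-module.  Then `B` decomposes as an `A`-module as `B ≅ A ⊕ M` where
`M = ker((1/2)Tr)`, `M` is a projective `A`-module of rank 1, products of two elements
of `M` lie in `A·1 ⊆ B`, and consequently `B ≅ A[z]/(z² - s)` whenever `M` is free of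
rank one: if `m₀` generates `M` then `B ≅ A[z]/(z² - s)` with `s = (1/2)Tr(m₀²)`. -/
theorem rank_two_algebra_decomposition
    [Module.Free A B] [Module.Finite A B] (hrank : Module.finrank A B = 2) :
    IsCompl (LinearMap.range (Algebra.linearMap A B)) (traceZero A B) ∧
    Module.Projective A (traceZero A B) ∧
    (∀ (P : Ideal A) (_ : P.IsPrime),
      Module.finrank (Localization.AtPrime P)
        (LocalizedModule P.primeCompl (traceZero A B)) = 1) ∧
    (∀ m m' : traceZero A B, ∃ a : A, (m : B) * (m' : B) = algebraMap A B a) ∧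
    (∀ m₀ : traceZero A B, Submodule.span A {(m₀ : B)} = traceZero A B →
      Nonempty (B ≃ₐ[A] AdjoinRoot
        (X ^ 2 - C (⅟(2 : A) * Algebra.trace A B ((m₀ : B) * (m₀ : B)))))) := by
  rcases subsingleton_or_nontrivial A with hA | hA
  · haveI : Subsingleton B := Module.subsingleton A B
    have hsub : ∀ p : Submodule A B, p = ⊤ := fun p =>
      eq_top_iff.mpr fun x _ => by rw [Subsingleton.elim x 0]; exact p.zero_mem
    haveI : Subsingleton (Submodule A B) := ⟨fun p q => by rw [hsub p, hsub q]⟩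
    refine ⟨⟨?_, ?_⟩, ?_, ?_, ?_, ?_⟩
    · rw [disjoint_iff]; exact Subsingleton.elim _ _
    · rw [codisjoint_iff]; exact Subsingleton.elim _ _
    · exact Module.Projective.of_split (traceZero A B).subtype 0
        (LinearMap.ext fun x => Subsingleton.elim _ _)
    · exact fun P hP => absurd (Subsingleton.elim P ⊤) hP.ne_top
    · exact fun m m' => ⟨0, Subsingleton.elim _ _⟩
    · intro m₀ _
      haveI : Subsingleton (AdjoinRoot
          (X ^ 2 - C (⅟(2 : A) * Algebra.trace A B ((m₀ : B) * (m₀ : B))))) :=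
        AdjoinRoot.mk_surjective.subsingleton
      exact ⟨{ toFun := fun _ => 0, invFun := fun _ => 0,
               left_inv := fun x => Subsingleton.elim _ _,
               right_inv := fun x => Subsingleton.elim _ _,
               map_mul' := fun _ _ => Subsingleton.elim _ _,
               map_add' := fun _ _ => Subsingleton.elim _ _,
               commutes' := fun _ => Subsingleton.elim _ _ }⟩
  · -- main case
    have hretr : ∀ a : A, halfTrace A B (algebraMap A B a) = a := by
      intro a
      simp only [halfTrace, LinearMap.smul_apply, smul_eq_mul]
      rw [Algebra.trace_algebraMap, hrank, nsmul_eq_mul, Nat.cast_ofNat, ← mul_assoc,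
        invOf_mul_self, one_mul]
    have hmem : ∀ x : B, x ∈ traceZero A B ↔ halfTrace A B x = 0 := fun x => Iff.rfl
    have htr0 : ∀ x : B, x ∈ traceZero A B → Algebra.trace A B x = 0 := by
      intro x hx
      rw [hmem] at hx
      simp only [halfTrace, LinearMap.smul_apply, smul_eq_mul] at hx
      calc Algebra.trace A B x = 2 * (⅟(2:A) * Algebra.trace A B x) := by
            rw [← mul_assoc, mul_invOf_self, one_mul]
        _ = 0 := by rw [hx, mul_zero]
    have hinj : Function.Injective (algebraMap A B) := fun a b h => by
      have := congrArg (halfTrace A B) h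
      rwa [hretr, hretr] at this
    have hcompl : IsCompl (LinearMap.range (Algebra.linearMap A B)) (traceZero A B) := by
      constructor
      · rw [Submodule.disjoint_def]
        rintro x ⟨a, rfl⟩ hx
        rw [Algebra.linearMap_apply] at hx ⊢
        rw [hmem, hretr] at hx
        rw [hx, map_zero]
      · rw [codisjoint_iff, eq_top_iff]
        intro x _
        rw [Submodule.mem_sup]
        refine ⟨algebraMap A B (halfTrace A B x), ⟨halfTrace A B x, rfl⟩,
          x - algebraMap A B (halfTrace A B x), ?_, by ring⟩
        rw [hmem, map_sub, hretr, sub_self]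
    -- the projection onto traceZero
    let π : B →ₗ[A] traceZero A B :=
      Submodule.linearProjOfIsCompl (traceZero A B) _ hcompl.symm
    have hπ : ∀ x : traceZero A B, π (x : B) = x := fun x =>
      Submodule.linearProjOfIsCompl_apply_left hcompl.symm x
    have hproj : Module.Projective A (traceZero A B) :=
      Module.Projective.of_split (traceZero A B).subtype π
        (LinearMap.ext fun x => hπ x)
    haveI hfin : Module.Finite A (traceZero A B) :=
      Module.Finite.of_surjective π (fun x => ⟨(x : B), hπ x⟩)
    -- products
    have hmul : ∀ m m' : traceZero A B, ∃ a : A, (m : B) * (m' : B) = algebraMap A B a := by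
      intro m m'
      let b := Module.finBasisOfFinrankEq A B hrank
      have h1 := my_sq_eq b (htr0 _ m.2)
      have h2 := my_sq_eq b (htr0 _ m'.2)
      have h3 := my_sq_eq b (htr0 _ (add_mem m.2 m'.2 : (m:B) + (m':B) ∈ traceZero A B))
      set c1 := -(Algebra.leftMulMatrix b ((m:B))).det with hc1
      set c2 := -(Algebra.leftMulMatrix b ((m':B))).det with hc2
      set c3 := -(Algebra.leftMulMatrix b ((m:B) + (m':B))).det with hc3
      refine ⟨⅟(2:A) * (c3 - c1 - c2), ?_⟩
      have key : algebraMap A B (c3 - c1 - c2) = 2 * ((m:B) * (m':B)) := by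
        rw [map_sub, map_sub, ← h1, ← h2, ← h3]; ring
      have h2B : (2 : B) = algebraMap A B 2 := by rw [map_ofNat]
      rw [map_mul, key, h2B, ← mul_assoc, ← map_mul, invOf_mul_self, map_one, one_mul]
    refine ⟨hcompl, hproj, ?_, hmul, ?_⟩
    · intro P hP
      haveI := hproj
      set R' := Localization.AtPrime P with hR'
      set L := LocalizedModule P.primeCompl (traceZero A B) with hL
      haveI : Module.Projective R' L :=
        Module.projective_of_isLocalizedModule (Rₛ := R') (Mₛ := L) P.primeCompl
          (LocalizedModule.mkLinearMap P.primeCompl (traceZero A B))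
      haveI : Module.Finite R' L :=
        Module.Finite.of_isLocalizedModule P.primeCompl
          (LocalizedModule.mkLinearMap P.primeCompl (traceZero A B))
      haveI : Module.FinitePresentation R' L := Module.finitePresentation_of_projective R' L
      haveI : Module.Free R' L := Module.free_of_flat_of_isLocalRing (R := R') (P := L)
      let e : (A × traceZero A B) ≃ₗ[A] B :=
        (LinearEquiv.prodCongr (LinearEquiv.ofInjective (Algebra.linearMap A B) hinj)
          (LinearEquiv.refl A (traceZero A B))).trans
          (Submodule.prodEquivOfIsCompl _ _ hcompl)
      let g : (A × traceZero A B) →ₗ[A] R' × L :=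
        (Algebra.linearMap A R').prodMap
          (LocalizedModule.mkLinearMap P.primeCompl (traceZero A B))
      haveI := my_isLocalizedModule_prodMap (N := traceZero A B) (N' := L) P.primeCompl (Algebra.linearMap A R')
        (LocalizedModule.mkLinearMap P.primeCompl (traceZero A B))
      have h1 : Module.finrank R' (R' × L) = Module.finrank A B :=
        Module.finrank_of_isLocalizedModule_of_free R' (Mₛ := R' × L) P.primeCompl
          (g ∘ₗ (e.symm : B ≃ₗ[A] (A × traceZero A B)))
      rw [hrank] at h1
      have h2 : Module.finrank R' (R' × L) = 1 + Module.finrank R' L := by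
        rw [Module.finrank_prod, Module.finrank_self]
      rw [h2] at h1
      show Module.finrank R' L = 1
      omega
    · intro m₀ hspan
      obtain ⟨s, hs⟩ := hmul m₀ m₀
      have hsval : ⅟(2:A) * Algebra.trace A B ((m₀:B) * (m₀:B)) = s := by
        rw [hs, Algebra.trace_algebraMap, hrank, nsmul_eq_mul, Nat.cast_ofNat, ← mul_assoc,
          invOf_mul_self, one_mul]
      set q : A[X] := X ^ 2 - C (⅟(2:A) * Algebra.trace A B ((m₀:B) * (m₀:B))) with hq
      have hq2 : q = X ^ 2 - C s := by rw [hq, hsval]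
      have hqmonic : q.Monic := by
        rw [hq2]; exact monic_X_pow_sub_C s (by norm_num)
      have hdeg : q.natDegree = 2 := by
        rw [hq2]; exact natDegree_X_pow_sub_C
      have hev : aeval ((m₀:B)) q = 0 := by
        rw [hq2]
        simp only [map_sub, map_pow, aeval_X, aeval_C]
        rw [pow_two, hs, sub_self]
      set h : AdjoinRoot q →ₐ[A] B := AdjoinRoot.liftAlgHom q (Algebra.ofId A B) ((m₀:B)) hev with hh
      set pb : PowerBasis A (AdjoinRoot q) := AdjoinRoot.powerBasis' hqmonic with hpb
      have hdim : pb.dim = 2 := hdeg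
      let b := Module.finBasisOfFinrankEq A B hrank
      let v : Fin 2 → B := ![1, (m₀:B)]
      let ψ : B →ₗ[A] B := b.constr A v
      have hψ : ∀ i, ψ (b i) = v i := fun i => b.constr_basis A v i
      have hvmem : ∀ x : B, x ∈ Submodule.span A (Set.range v) := by
        intro x
        have hx : x ∈ (LinearMap.range (Algebra.linearMap A B)) ⊔ (traceZero A B) := by
          rw [codisjoint_iff.mp hcompl.codisjoint]; trivial
        obtain ⟨y, hy, z, hz, rfl⟩ := Submodule.mem_sup.mp hx
        obtain ⟨a, rfl⟩ := hy
        refine add_mem ?_ ?_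
        · rw [Algebra.linearMap_apply, Algebra.algebraMap_eq_smul_one]
          exact Submodule.smul_mem _ a (Submodule.subset_span (Set.mem_range.mpr ⟨0, rfl⟩))
        · rw [← hspan] at hz
          exact Submodule.span_mono (Set.singleton_subset_iff.mpr (Set.mem_range.mpr ⟨1, rfl⟩)) hz
      have hψsurj : Function.Surjective ψ := by
        have hle : Submodule.span A (Set.range v) ≤ LinearMap.range ψ :=
          Submodule.span_le.mpr (Set.range_subset_iff.mpr fun i =>
            LinearMap.mem_range.mpr ⟨b i, hψ i⟩)
        intro x
        exact hle (hvmem x)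
      have hψinj : Function.Injective ψ :=
        OrzechProperty.injective_of_surjective_endomorphism ψ hψsurj
      let ψe : B ≃ₗ[A] B := LinearEquiv.ofBijective ψ ⟨hψinj, hψsurj⟩
      let bB : Module.Basis (Fin 2) A B := b.map ψe
      have hbB : ∀ i, bB i = v i := fun i => by
        rw [Module.Basis.map_apply]; exact hψ i
      let le : AdjoinRoot q ≃ₗ[A] B := pb.basis.equiv bB (finCongr hdim)
      have hkey : h.toLinearMap = (le : AdjoinRoot q →ₗ[A] B) := by
        apply pb.basis.ext
        intro i
        show h (pb.basis i) = le (pb.basis i)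
        rw [Module.Basis.equiv_apply, hbB, PowerBasis.basis_eq_pow, map_pow]
        have hgen : h pb.gen = (m₀:B) := by
          rw [hpb, AdjoinRoot.powerBasis'_gen, hh]; exact AdjoinRoot.liftAlgHom_root _ _ _ _
        rw [hgen]
        rcases i with ⟨iv, hi⟩
        have hi2 : iv < 2 := hdim ▸ hi
        interval_cases iv <;> simp [v, finCongr]
      have hbij : Function.Bijective h := by
        have hfun : (h : AdjoinRoot q → B) = le := funext fun x => LinearMap.congr_fun hkey x
        rw [show (⇑h : AdjoinRoot q → B) = ⇑le from hfun]
        exact le.bijective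
      exact ⟨(AlgEquiv.ofBijective h hbij).symm⟩
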